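/- For the at-most-q^m-length setting: if i and j are integers in [0, q^m) with q-ary digits agreeing in position k, and i^{(t)}, j^{(t)} are obtained from i, j by replacing the k-th digit d by (d+t) mod q for t ∈ {1,…,q-1}, then for the quadratic form f(x) = Σ_{α}Σ_{β} a_{α,β} x_{π_α(β)} x_{π_α(β+1)} + (terms not involving products of two distinct quadratic neighbors) evaluated at digit vectors, with k = π_{α₁}(β₁-1) the predecessor of the first position β₁ where the digit vectors of i and j differ within block α₁ (and digits of i and j agree on all blocks α < α₁ and at positions π_{α₁}(1),…,π_{α₁}(β₁-1)), one has f_{i^{(t)}} - f_i - f_{j^{(t)}} + f_j ≡ t · a_{α₁,β₁-1} · (i_{π_{α₁}(β₁)} - j_{π_{α₁}(β₁)}) (mod q). Consequently, if a_{α₁,β₁-1} is coprime to q and i_{π_{α₁}(β₁)} ≠ j_{π_{α₁}(β₁)}, then ξ^{f_i - f_j} + Σ_{t=1}^{q-1} ξ^{f_{i^{(t)}} - f_{j^{(t)}}} = 0 where ξ = e^{2πi/q}. -/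

import Mathlib

open Finset Complex

/-- The primitive `q`-th root of unity `ξ = e^{2πi/q}`. -/
noncomputable def xiq (q : ℕ) : ℂ := Complex.exp (2 * Real.pi * Complex.I / q)

/-- The complex value `ξ^x` attached to `x ∈ ℤ_q`. -/
noncomputable def ec (q : ℕ) (x : ZMod q) : ℂ := xiq q ^ x.val

/-- The `k`-th `q`-ary digit (1-indexed) of the natural number `i`. -/
def dig (q i k : ℕ) : ℕ := i / q ^ (k - 1) % q

/-- The natural number obtained from `i` by replacing its `k`-th `q`-ary digit `d`
by `(d + t) mod q`, all other digits unchanged. -/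
def modifyDigit (q i k t : ℕ) : ℕ :=
  i - dig q i k * q ^ (k - 1) + (dig q i k + t) % q * q ^ (k - 1)

lemma dig_lt {q : ℕ} (hq : 0 < q) (i k : ℕ) : dig q i k < q := Nat.mod_lt _ hq

lemma modifyDigit_eq (q i k t : ℕ) :
    modifyDigit q i k t = i % q ^ (k-1) + (dig q i k + t) % q * q ^ (k-1)
      + i / q ^ (k-1) / q * (q ^ (k-1) * q) := by
  have h2 := Nat.mod_add_div i (q ^ (k-1))
  have h3 := Nat.mod_add_div (i / q ^ (k-1)) q
  unfold modifyDigit dig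
  set P := q ^ (k-1)
  set A := i % P
  set B := i / P
  set D := B % q
  set H := B / q
  have hiB : i = A + (D + H * q) * P := by rw [← h2, ← h3]; ring
  have h4 : (D + H * q) * P = D * P + H * (P * q) := by ring
  omega

lemma dig_of_decomp {q : ℕ} (hq : 0 < q) {k : ℕ} {A D' : ℕ} (H : ℕ)
    (hA : A < q ^ (k-1)) (hD' : D' < q) :
    dig q (A + D' * q ^ (k-1) + H * (q ^ (k-1) * q)) k = D' := by
  unfold dig
  have h1 : A + D' * q ^ (k-1) + H * (q ^ (k-1) * q)
      = A + (D' + H * q) * q ^ (k-1) := by ring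
  rw [h1, Nat.add_mul_div_right _ _ (pow_pos hq _), Nat.div_eq_of_lt hA, zero_add,
    Nat.add_mul_mod_self_right, Nat.mod_eq_of_lt hD']

lemma dig_modifyDigit_self {q : ℕ} (hq : 0 < q) (i k t : ℕ) :
    dig q (modifyDigit q i k t) k = (dig q i k + t) % q := by
  rw [modifyDigit_eq]
  exact dig_of_decomp hq _ (Nat.mod_lt _ (pow_pos hq _)) (Nat.mod_lt _ hq)

lemma dig_modifyDigit_ne {q : ℕ} (hq : 0 < q) {i k s : ℕ} (hk : 1 ≤ k) (hs : 1 ≤ s)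
    (hsk : s ≠ k) (t : ℕ) : dig q (modifyDigit q i k t) s = dig q i s := by
  have hP : ∀ n : ℕ, 0 < q ^ n := fun n => pow_pos hq _
  rw [modifyDigit_eq]
  set P := q ^ (k-1) with hPdef
  set A := i % P with hAdef
  set D' := (dig q i k + t) % q with hD'def
  set H := i / P / q with hHdef
  have hA : A < P := Nat.mod_lt _ (hP _)
  have hD' : D' < q := Nat.mod_lt _ hq
  have hHi : H = i / (P * q) := Nat.div_div_eq_div_mul i P q
  rcases lt_or_gt_of_ne hsk with hlt | hgt
  · -- s < k : low digits agree mod q^s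
    have hdvd : q ^ s ∣ P := pow_dvd_pow q (by omega)
    have hmod : (A + D' * P + H * (P * q)) % q ^ s = i % q ^ s := by
      have h1 : (A + D' * P + H * (P * q)) % P = i % P := by
        have h0 : A + D' * P + H * (P * q) = A + (D' + H * q) * P := by ring
        rw [h0, Nat.add_mul_mod_self_right, hAdef, Nat.mod_mod_of_dvd _ dvd_rfl]
      calc (A + D' * P + H * (P * q)) % q ^ s
          = (A + D' * P + H * (P * q)) % P % q ^ s := (Nat.mod_mod_of_dvd _ hdvd).symm
        _ = i % P % q ^ s := by rw [h1]
        _ = i % q ^ s := Nat.mod_mod_of_dvd _ hdvd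
    unfold dig
    have hq_s : q ^ (s-1) * q = q ^ s := by
      rw [← pow_succ]; congr 1; omega
    rw [← Nat.mod_mul_right_div_self, ← Nat.mod_mul_right_div_self, hq_s, hmod]
  · -- s > k : high digits agree
    have hdiv : (A + D' * P + H * (P * q)) / (P * q) = i / (P * q) := by
      have hlt2 : A + D' * P < P * q := by
        calc A + D' * P < P + D' * P := by omega
          _ = (D' + 1) * P := by ring
          _ ≤ q * P := Nat.mul_le_mul_right _ (by omega)
          _ = P * q := Nat.mul_comm _ _
      rw [Nat.add_mul_div_right _ _ (Nat.mul_pos (hP _) hq), Nat.div_eq_of_lt hlt2,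
        zero_add, hHi]
    unfold dig
    have hPq : P * q = q ^ k := by
      rw [hPdef, ← pow_succ]; congr 1; omega
    have hsplit : ∀ n : ℕ, n / q ^ (s-1) = n / q ^ k / q ^ (s-1-k) := by
      intro n
      rw [Nat.div_div_eq_div_mul, ← pow_add]
      congr 2; omega
    rw [hsplit, hsplit, ← hPq, hdiv]

lemma xiq_pow_q {q : ℕ} (hq : 0 < q) : xiq q ^ q = 1 :=
  (Complex.isPrimitiveRoot_exp q hq.ne').pow_eq_one

lemma xiq_pow_mod {q : ℕ} (hq : 0 < q) (n : ℕ) : xiq q ^ (n % q) = xiq q ^ n := by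
  conv_rhs => rw [← Nat.mod_add_div n q]
  rw [pow_add, pow_mul, xiq_pow_q hq, one_pow, mul_one]

lemma ec_add {q : ℕ} (hq : 0 < q) (u v : ZMod q) : ec q (u + v) = ec q u * ec q v := by
  haveI : NeZero q := ⟨hq.ne'⟩
  unfold ec
  rw [← pow_add, ZMod.val_add, xiq_pow_mod hq]

lemma ec_zero {q : ℕ} (hq : 0 < q) : ec q 0 = 1 := by
  haveI : NeZero q := ⟨hq.ne'⟩
  unfold ec
  rw [ZMod.val_zero, pow_zero]

lemma ec_nat_mul {q : ℕ} (hq : 0 < q) (t : ℕ) (c : ZMod q) :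
    ec q ((t : ZMod q) * c) = ec q c ^ t := by
  induction t with
  | zero => simp [ec_zero hq]
  | succ n ih =>
    have : ((n + 1 : ℕ) : ZMod q) * c = (n : ZMod q) * c + c := by push_cast; ring
    rw [this, ec_add hq, ih, pow_succ]

lemma ec_ne_one {q : ℕ} (hq : 0 < q) {c : ZMod q} (hc : c ≠ 0) : ec q c ≠ 1 := by
  haveI : NeZero q := ⟨hq.ne'⟩
  unfold ec
  exact (Complex.isPrimitiveRoot_exp q hq.ne').pow_ne_one_of_pos_of_lt
    (fun h => hc ((ZMod.val_eq_zero c).mp h))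
    (ZMod.val_lt c)

lemma ec_pow_q {q : ℕ} (hq : 0 < q) (c : ZMod q) : ec q c ^ q = 1 := by
  unfold ec
  rw [← pow_mul, mul_comm, pow_mul, xiq_pow_q hq, one_pow]

lemma geom_zero {q : ℕ} (hq : 0 < q) {c : ZMod q} (hc : c ≠ 0) :
    ∑ t ∈ Finset.range q, ec q c ^ t = 0 := by
  rw [geom_sum_eq (ec_ne_one hq hc)]
  rw [ec_pow_q hq, sub_self, zero_div]

theorem stmt12 (q m d : ℕ) (hq : 2 ≤ q) (hm : 1 ≤ m) (hd : 1 ≤ d)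
    (mα : ℕ → ℕ)
    (π : ℕ → ℕ → ℕ)
    (hrange : ∀ α ∈ Finset.Icc 1 d, ∀ β ∈ Finset.Icc 1 (mα α), π α β ∈ Finset.Icc 1 m)
    (hinj : ∀ α ∈ Finset.Icc 1 d, ∀ β ∈ Finset.Icc 1 (mα α), ∀ α' ∈ Finset.Icc 1 d,
      ∀ β' ∈ Finset.Icc 1 (mα α'), π α β = π α' β' → α = α' ∧ β = β')
    (a : ℕ → ℕ → ℕ) (g : ℕ → ℕ → ZMod q)
    (F : ℕ → ZMod q)
    (hF : ∀ i, F i =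
      (∑ α ∈ Finset.Icc 1 d, ∑ β ∈ Finset.Icc 1 (mα α - 1),
        (a α β : ZMod q) * (dig q i (π α β) : ZMod q) * (dig q i (π α (β + 1)) : ZMod q))
      + ∑ s ∈ Finset.Icc 1 m, g s (dig q i s))
    (α₁ β₁ i j : ℕ) (hα₁ : α₁ ∈ Finset.Icc 1 d) (hβ₁ : β₁ ∈ Finset.Icc 2 (mα α₁))
    (hi : i < q ^ m) (hj : j < q ^ m)
    (hagree1 : ∀ α ∈ Finset.Icc 1 d, α < α₁ → ∀ β ∈ Finset.Icc 1 (mα α),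
      dig q i (π α β) = dig q j (π α β))
    (hagree2 : ∀ β ∈ Finset.Icc 1 (β₁ - 1), dig q i (π α₁ β) = dig q j (π α₁ β))
    (hne : dig q i (π α₁ β₁) ≠ dig q j (π α₁ β₁)) :
    (∀ t ∈ Finset.Icc 1 (q - 1),
      F (modifyDigit q i (π α₁ (β₁ - 1)) t) - F i
        - F (modifyDigit q j (π α₁ (β₁ - 1)) t) + F j
      = (t : ZMod q) * (a α₁ (β₁ - 1) : ZMod q) *
          ((dig q i (π α₁ β₁) : ZMod q) - (dig q j (π α₁ β₁) : ZMod q))) ∧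
    (Nat.Coprime (a α₁ (β₁ - 1)) q →
      ec q (F i - F j) + ∑ t ∈ Finset.Icc 1 (q - 1),
        ec q (F (modifyDigit q i (π α₁ (β₁ - 1)) t)
              - F (modifyDigit q j (π α₁ (β₁ - 1)) t)) = 0) := by
  have hq0 : 0 < q := by omega
  haveI : NeZero q := ⟨hq0.ne'⟩
  obtain ⟨hβ₁a, hβ₁b⟩ : 2 ≤ β₁ ∧ β₁ ≤ mα α₁ := Finset.mem_Icc.mp hβ₁
  set k := π α₁ (β₁ - 1) with hkdef
  have hβ₁m : β₁ - 1 ∈ Finset.Icc 1 (mα α₁) := by rw [Finset.mem_Icc]; omega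
  have hβ₁mem : β₁ ∈ Finset.Icc 1 (mα α₁) := by rw [Finset.mem_Icc]; omega
  have hkrange := hrange α₁ hα₁ (β₁ - 1) hβ₁m
  have hk1 : 1 ≤ k := (Finset.mem_Icc.mp hkrange).1
  have hkij : dig q i k = dig q j k := hagree2 (β₁ - 1) (by rw [Finset.mem_Icc]; omega)
  have hdig' : ∀ x t s, 1 ≤ s → s ≠ k → dig q (modifyDigit q x k t) s = dig q x s :=
    fun x t s hs hsk => dig_modifyDigit_ne hq0 hk1 hs hsk t
  have hdigk : ∀ x t, dig q (modifyDigit q x k t) k = (dig q x k + t) % q :=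
    fun x t => dig_modifyDigit_self hq0 x k t
  have hne_k : ∀ α ∈ Finset.Icc 1 d, ∀ β ∈ Finset.Icc 1 (mα α),
      ¬(α = α₁ ∧ β = β₁ - 1) → π α β ≠ k := by
    intro α hα β hβ hne' heq
    exact hne' (hinj α hα β hβ α₁ hα₁ (β₁ - 1) hβ₁m heq)
  have hpos : ∀ α ∈ Finset.Icc 1 d, ∀ β ∈ Finset.Icc 1 (mα α), 1 ≤ π α β :=
    fun α hα β hβ => (Finset.mem_Icc.mp (hrange α hα β hβ)).1
  have hβ₁ne : π α₁ β₁ ≠ k := hne_k α₁ hα₁ β₁ hβ₁mem (by omega)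
  have hβ₁pos : 1 ≤ π α₁ β₁ := hpos α₁ hα₁ β₁ hβ₁mem
  -- the main single-variable difference computation
  have hFdiff : ∀ x t, F (modifyDigit q x k t) - F x
      = (t : ZMod q) * (a α₁ (β₁ - 1) : ZMod q) * (dig q x (π α₁ β₁) : ZMod q)
        + (if 3 ≤ β₁ then
            (a α₁ (β₁ - 2) : ZMod q) * (dig q x (π α₁ (β₁ - 2)) : ZMod q) * (t : ZMod q)
          else 0)
        + (g k ((dig q x k + t) % q) - g k (dig q x k)) := by
    intro x t
    rw [hF, hF]
    set x' := modifyDigit q x k t with hx'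
    have hGx : (∑ s ∈ Finset.Icc 1 m, g s (dig q x' s))
        - (∑ s ∈ Finset.Icc 1 m, g s (dig q x s))
        = g k ((dig q x k + t) % q) - g k (dig q x k) := by
      rw [← Finset.sum_sub_distrib]
      rw [Finset.sum_eq_single_of_mem k hkrange]
      · rw [hdigk]
      · intro s hs hsne
        rw [hdig' x t s (Finset.mem_Icc.mp hs).1 hsne, sub_self]
    have hSx : (∑ α ∈ Finset.Icc 1 d, ∑ β ∈ Finset.Icc 1 (mα α - 1),
          (a α β : ZMod q) * (dig q x' (π α β) : ZMod q) * (dig q x' (π α (β + 1)) : ZMod q))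
        - (∑ α ∈ Finset.Icc 1 d, ∑ β ∈ Finset.Icc 1 (mα α - 1),
          (a α β : ZMod q) * (dig q x (π α β) : ZMod q) * (dig q x (π α (β + 1)) : ZMod q))
        = (t : ZMod q) * (a α₁ (β₁ - 1) : ZMod q) * (dig q x (π α₁ β₁) : ZMod q)
          + (if 3 ≤ β₁ then
              (a α₁ (β₁ - 2) : ZMod q) * (dig q x (π α₁ (β₁ - 2)) : ZMod q) * (t : ZMod q)
            else 0) := by
      rw [← Finset.sum_sub_distrib]
      simp only [← Finset.sum_sub_distrib]
      have hzero : ∀ α ∈ Finset.Icc 1 d, ∀ β ∈ Finset.Icc 1 (mα α - 1),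
          ¬(α = α₁ ∧ (β = β₁ - 1 ∨ β = β₁ - 2)) →
          (a α β : ZMod q) * (dig q x' (π α β) : ZMod q) * (dig q x' (π α (β + 1)) : ZMod q)
           - (a α β : ZMod q) * (dig q x (π α β) : ZMod q) * (dig q x (π α (β + 1)) : ZMod q)
           = 0 := by
        intro α hα β hβ hnot
        have hβm : β ∈ Finset.Icc 1 (mα α) := by
          rw [Finset.mem_Icc] at hβ ⊢; omega
        have hβ1m : β + 1 ∈ Finset.Icc 1 (mα α) := by
          rw [Finset.mem_Icc] at hβ ⊢; omega
        have h1 : π α β ≠ k := hne_k α hα β hβm (by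
          intro ⟨h1, h2⟩; exact hnot ⟨h1, Or.inl h2⟩)
        have h2 : π α (β + 1) ≠ k := hne_k α hα (β + 1) hβ1m (by
          intro ⟨h1, h2⟩
          rw [Finset.mem_Icc] at hβ
          exact hnot ⟨h1, Or.inr (by omega)⟩)
        rw [hdig' x t _ (hpos α hα β hβm) h1, hdig' x t _ (hpos α hα (β + 1) hβ1m) h2,
          sub_self]
      rw [Finset.sum_eq_single_of_mem α₁ hα₁ (fun α hα hαne =>
        Finset.sum_eq_zero (fun β hβ => hzero α hα β hβ (by tauto)))]
      -- now the inner sum over β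
      have hmem1 : β₁ - 1 ∈ Finset.Icc 1 (mα α₁ - 1) := by rw [Finset.mem_Icc]; omega
      have hd1 : dig q x' (π α₁ β₁) = dig q x (π α₁ β₁) := hdig' x t _ hβ₁pos hβ₁ne
      have hcast : ((dig q x k + t) % q : ℕ) = ((dig q x k : ZMod q) + t : ZMod q).val := by
        rw [← Nat.cast_add, ZMod.val_natCast]
      have hterm1 :
          (a α₁ (β₁ - 1) : ZMod q) * (dig q x' (π α₁ (β₁ - 1)) : ZMod q)
            * (dig q x' (π α₁ (β₁ - 1 + 1)) : ZMod q)
          - (a α₁ (β₁ - 1) : ZMod q) * (dig q x (π α₁ (β₁ - 1)) : ZMod q)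
            * (dig q x (π α₁ (β₁ - 1 + 1)) : ZMod q)
          = (t : ZMod q) * (a α₁ (β₁ - 1) : ZMod q) * (dig q x (π α₁ β₁) : ZMod q) := by
        have hb : β₁ - 1 + 1 = β₁ := by omega
        rw [hb, hd1, ← hkdef, hdigk, ZMod.natCast_mod, Nat.cast_add]
        ring
      by_cases h3 : 3 ≤ β₁
      · have hmem2 : β₁ - 2 ∈ Finset.Icc 1 (mα α₁ - 1) := by rw [Finset.mem_Icc]; omega
        rw [Finset.sum_eq_add_of_mem (β₁ - 1) (β₁ - 2) hmem1 hmem2 (by omega)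
          (fun c hc ⟨hc1, hc2⟩ => hzero α₁ hα₁ c hc (by tauto))]
        have hterm2 :
            (a α₁ (β₁ - 2) : ZMod q) * (dig q x' (π α₁ (β₁ - 2)) : ZMod q)
              * (dig q x' (π α₁ (β₁ - 2 + 1)) : ZMod q)
            - (a α₁ (β₁ - 2) : ZMod q) * (dig q x (π α₁ (β₁ - 2)) : ZMod q)
              * (dig q x (π α₁ (β₁ - 2 + 1)) : ZMod q)
            = (a α₁ (β₁ - 2) : ZMod q) * (dig q x (π α₁ (β₁ - 2)) : ZMod q) * (t : ZMod q) := by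
          have hb : β₁ - 2 + 1 = β₁ - 1 := by omega
          have hmem2' : β₁ - 2 ∈ Finset.Icc 1 (mα α₁) := by rw [Finset.mem_Icc]; omega
          have hne2 : π α₁ (β₁ - 2) ≠ k := hne_k α₁ hα₁ (β₁ - 2) hmem2' (by omega)
          rw [hb, hdig' x t _ (hpos α₁ hα₁ (β₁ - 2) hmem2') hne2, ← hkdef, hdigk,
            ZMod.natCast_mod, Nat.cast_add]
          ring
        rw [hterm1, hterm2, if_pos h3]
      · rw [Finset.sum_eq_single_of_mem (β₁ - 1) hmem1
          (fun c hc hcne => hzero α₁ hα₁ c hc (by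
            rw [Finset.mem_Icc] at hc
            rintro ⟨-, hc2 | hc2⟩ <;> omega))]
        rw [hterm1, if_neg h3, add_zero]
    linear_combination hSx + hGx
  -- Part 1
  have part1 : ∀ t ∈ Finset.Icc 1 (q - 1),
      F (modifyDigit q i k t) - F i - F (modifyDigit q j k t) + F j
      = (t : ZMod q) * (a α₁ (β₁ - 1) : ZMod q) *
          ((dig q i (π α₁ β₁) : ZMod q) - (dig q j (π α₁ β₁) : ZMod q)) := by
    intro t ht
    have hi' := hFdiff i t
    have hj' := hFdiff j t
    have hif : (if 3 ≤ β₁ then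
          (a α₁ (β₁ - 2) : ZMod q) * (dig q i (π α₁ (β₁ - 2)) : ZMod q) * (t : ZMod q)
        else 0)
        = (if 3 ≤ β₁ then
          (a α₁ (β₁ - 2) : ZMod q) * (dig q j (π α₁ (β₁ - 2)) : ZMod q) * (t : ZMod q)
        else 0) := by
      by_cases h3 : 3 ≤ β₁
      · rw [if_pos h3, if_pos h3, hagree2 (β₁ - 2) (by rw [Finset.mem_Icc]; omega)]
      · rw [if_neg h3, if_neg h3]
    rw [hif, hkij] at hi'
    linear_combination hi' - hj'
  refine ⟨part1, ?_⟩
  intro hcop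
  set c : ZMod q := (a α₁ (β₁ - 1) : ZMod q) *
    ((dig q i (π α₁ β₁) : ZMod q) - (dig q j (π α₁ β₁) : ZMod q)) with hcdef
  have hcne : c ≠ 0 := by
    have hu : IsUnit ((a α₁ (β₁ - 1) : ZMod q)) := (ZMod.isUnit_iff_coprime _ q).mpr hcop
    have hdd : ((dig q i (π α₁ β₁) : ZMod q) - (dig q j (π α₁ β₁) : ZMod q)) ≠ 0 := by
      rw [sub_ne_zero]
      intro hEq
      apply hne
      have := congrArg ZMod.val hEq
      rwa [ZMod.val_natCast_of_lt (dig_lt hq0 i _),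
        ZMod.val_natCast_of_lt (dig_lt hq0 j _)] at this
    rw [hcdef]
    exact fun h => hdd ((hu.mul_right_eq_zero).mp h)
  set X : ZMod q := F i - F j with hXdef
  have hstep : ∀ t ∈ Finset.Icc 1 (q - 1),
      F (modifyDigit q i k t) - F (modifyDigit q j k t) = X + (t : ZMod q) * c := by
    intro t ht
    have := part1 t ht
    rw [hXdef, hcdef]
    linear_combination this
  have hsum : ∑ t ∈ Finset.Icc 1 (q - 1),
      ec q (F (modifyDigit q i k t) - F (modifyDigit q j k t))
      = ∑ t ∈ Finset.Icc 1 (q - 1), ec q X * ec q c ^ t := by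
    apply Finset.sum_congr rfl
    intro t ht
    rw [hstep t ht, ec_add hq0, ec_nat_mul hq0]
  rw [hsum]
  have hrange' : Finset.range q = insert 0 (Finset.Icc 1 (q - 1)) := by
    ext n; simp [Finset.mem_range, Finset.mem_Icc]; omega
  have h0 : ec q X + ∑ t ∈ Finset.Icc 1 (q - 1), ec q X * ec q c ^ t
      = ∑ t ∈ Finset.range q, ec q X * ec q c ^ t := by
    rw [hrange', Finset.sum_insert (by simp), pow_zero, mul_one]
  rw [h0, ← Finset.mul_sum, geom_zero hq0 hcne, mul_zero]
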